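/- Assume λ_1 > λ_2 > … > λ_p > 0 and y_1 ≥ y_2 ≥ … ≥ y_p ≥ 0, and let w* be a solution of the linear program: minimize Σ_{i=1}^p λ_i w_i subject to Σ_{i=1}^k (y_i − λ_i) ≤ Σ_{i=1}^k w_i for k = 1,…,p and w_1 ≥ w_2 ≥ … ≥ w_p ≥ 0. Then, with the conventions w*_{p+1} = 0 and y_{p+1} = 0, for every j ∈ {1,…,p}: (i) either Σ_{i=1}^j (y_i − λ_i) = Σ_{i=1}^j w*_i or w*_j = w*_{j+1}; and (ii) y_j − w*_j ≥ y_{j+1} − w*_{j+1}. -/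

import Mathlib

noncomputable section

/-- Feasible set of the ODS linear program:
`∑_{i=1}^k (y_i − λ_i) ≤ ∑_{i=1}^k w_i` for every `k`, and `w_1 ≥ … ≥ w_p ≥ 0`. -/
def LPFeas {p : ℕ} (y lam w : Fin p → ℝ) : Prop :=
  (∀ k : Fin p, ∑ i ∈ Finset.Iic k, (y i - lam i) ≤ ∑ i ∈ Finset.Iic k, w i) ∧
    Antitone w ∧ (∀ i, 0 ≤ w i)

/-- Extension of a vector by zero: `extz w j = w j` for `j < p` and `0` otherwise
(implements the conventions `w_{p+1} = 0`, `y_{p+1} = 0`). -/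
def extz {p : ℕ} (w : Fin p → ℝ) (j : ℕ) : ℝ :=
  if h : j < p then w ⟨j, h⟩ else 0

/-- Split a sum over `Iic j` into the sum over `Iio j` plus the top term. -/
lemma sum_Iic_split {p : ℕ} (f : Fin p → ℝ) (j : Fin p) :
    ∑ i ∈ Finset.Iic j, f i = ∑ i ∈ Finset.Iio j, f i + f j := by
  rw [← Finset.Iio_insert, Finset.sum_insert (by simp), add_comm]

/-- The feasibility constraints also hold over the open intervals `Iio j`. -/
lemma feas_Iio {p : ℕ} {y lam w : Fin p → ℝ}
    (hc : ∀ k : Fin p, ∑ i ∈ Finset.Iic k, (y i - lam i) ≤ ∑ i ∈ Finset.Iic k, w i)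
    (j : Fin p) :
    ∑ i ∈ Finset.Iio j, (y i - lam i) ≤ ∑ i ∈ Finset.Iio j, w i := by
  rcases Nat.eq_zero_or_pos j.val with h | h
  · have he : Finset.Iio j = ∅ := by
      ext i
      simp only [Finset.mem_Iio, Fin.lt_def, h, Finset.notMem_empty, iff_false]
      omega
    simp [he]
  · have hk : j.val - 1 < p := lt_of_le_of_lt (Nat.sub_le _ _) j.isLt
    have he : Finset.Iio j = Finset.Iic ⟨j.val - 1, hk⟩ := by
      ext i
      simp only [Finset.mem_Iio, Finset.mem_Iic, Fin.lt_def, Fin.le_def]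
      omega
    rw [he]
    exact hc _

/-- Part (i): at every index, either the constraint is tight or the solution is flat. -/
lemma tight_or_flat {p : ℕ} {lam y wstar : Fin p → ℝ} (hlam : StrictAnti lam)
    (hpos : ∀ i, 0 < lam i)
    (hfeas : LPFeas y lam wstar)
    (hopt : ∀ u : Fin p → ℝ, LPFeas y lam u → ∑ i, lam i * wstar i ≤ ∑ i, lam i * u i)
    (j : Fin p) :
    (∑ i ∈ Finset.Iic j, (y i - lam i)) = ∑ i ∈ Finset.Iic j, wstar i ∨
      wstar j = extz wstar (j.val + 1) := by
  obtain ⟨hc, hmono, hnn⟩ := hfeas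
  by_contra hcon
  push_neg at hcon
  obtain ⟨hne, hne2⟩ := hcon
  have hslack : ∑ i ∈ Finset.Iic j, (y i - lam i) < ∑ i ∈ Finset.Iic j, wstar i :=
    lt_of_le_of_ne (hc j) hne
  set S : ℝ := ∑ i ∈ Finset.Iic j, wstar i - ∑ i ∈ Finset.Iic j, (y i - lam i) with hS
  have hSpos : 0 < S := sub_pos.mpr hslack
  by_cases h1 : j.val + 1 < p
  · -- interior case: shift mass from coordinate j to coordinate j+1
    set j' : Fin p := ⟨j.val + 1, h1⟩ with hj'
    have hjj' : j < j' := by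
      simp [Fin.lt_def, hj']
    have hne2' : wstar j ≠ wstar j' := by
      simpa [extz, h1, hj'] using hne2
    have hwgt : wstar j' < wstar j :=
      lt_of_le_of_ne (hmono hjj'.le) (fun h => hne2' h.symm)
    set ε : ℝ := min S ((wstar j - wstar j') / 2) with hε
    have hεpos : 0 < ε := lt_min hSpos (by linarith)
    have hεS : ε ≤ S := min_le_left _ _
    have hε2 : 2 * ε ≤ wstar j - wstar j' := by
      have := min_le_right S ((wstar j - wstar j') / 2)
      have h2 : ε ≤ (wstar j - wstar j') / 2 := this
      linarith
    set u : Fin p → ℝ :=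
      fun i => wstar i + (if i = j then -ε else 0) + (if i = j' then ε else 0) with hu
    have hsum : ∀ s : Finset (Fin p),
        ∑ i ∈ s, u i = ∑ i ∈ s, wstar i
          + (if j ∈ s then -ε else 0) + (if j' ∈ s then ε else 0) := by
      intro s
      simp [hu, Finset.sum_add_distrib, Finset.sum_ite_eq' s]
    have huj : u j = wstar j - ε := by
      have : j ≠ j' := ne_of_lt hjj'
      simp [hu, this, sub_eq_add_neg]
    have huj' : u j' = wstar j' + ε := by
      have : j' ≠ j := (ne_of_lt hjj').symm
      simp [hu, this, sub_eq_add_neg]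
    have huo : ∀ i : Fin p, i ≠ j → i ≠ j' → u i = wstar i := by
      intro i hi hi'
      simp [hu, hi, hi']
    -- feasibility constraints for u
    have hcu : ∀ k : Fin p, ∑ i ∈ Finset.Iic k, (y i - lam i) ≤ ∑ i ∈ Finset.Iic k, u i := by
      intro k
      rw [hsum]
      by_cases h2 : j' ≤ k
      · have h3 : j ≤ k := le_trans hjj'.le h2
        simp only [Finset.mem_Iic, h2, h3, if_true]
        have := hc k
        linarith
      · by_cases h3 : j ≤ k
        · have hkj : k = j := by
            have : k ≤ j := by
              have hk1 : k.val < j.val + 1 := by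
                by_contra hx
                exact h2 (by simpa [Fin.le_def, hj'] using Nat.le_of_not_lt hx)
              exact Fin.le_def.mpr (Nat.lt_succ_iff.mp hk1)
            exact le_antisymm this h3
          subst hkj
          simp only [Finset.mem_Iic, h2, h3, if_true, if_false]
          linarith
        · have h2' : ¬ j' ≤ k := h2
          simp only [Finset.mem_Iic, h2', h3, if_false]
          have := hc k
          linarith
    -- antitonicity of u
    have hmu : Antitone u := by
      intro a b hab
      rcases eq_or_lt_of_le hab with rfl | hab
      · exact le_refl _
      · by_cases hbj : b = j
        · have haltj : a < j := by rw [← hbj]; exact hab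
          rw [hbj, huj, huo a (ne_of_lt haltj) (ne_of_lt (lt_trans haltj hjj'))]
          have := hmono haltj.le
          linarith
        · by_cases hbj' : b = j'
          · have haj'lt : a < j' := by rw [← hbj']; exact hab
            by_cases haj : a = j
            · rw [hbj', haj, huj, huj']
              linarith
            · have haltj : a < j := by
                have hv : a.val < j.val + 1 := by
                  simpa [Fin.lt_def, hj'] using haj'lt
                exact lt_of_le_of_ne (Fin.le_def.mpr (Nat.lt_succ_iff.mp hv)) haj
              rw [hbj', huj', huo a (ne_of_lt haltj) (ne_of_lt (lt_trans haltj hjj'))]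
              have := hmono haltj.le
              linarith
          · rw [huo b hbj hbj']
            by_cases haj : a = j
            · have hjb : j < b := by rw [← haj]; exact hab
              rw [haj, huj]
              have hj'b : j' ≤ b := by
                have hv : j.val + 1 ≤ b.val := hjb
                exact Fin.le_def.mpr (by simpa [hj'] using hv)
              have := hmono hj'b
              linarith
            · by_cases haj' : a = j'
              · rw [haj', huj']
                have := hmono hab.le
                rw [haj'] at this
                linarith
              · rw [huo a haj haj']
                exact hmono hab.le
    -- nonnegativity of u
    have hnnu : ∀ i, 0 ≤ u i := by
      intro i
      by_cases hij : i = j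
      · subst hij
        rw [huj]
        have := hnn j'
        linarith
      · by_cases hij' : i = j'
        · subst hij'
          rw [huj']
          have := hnn j'
          linarith
        · rw [huo i hij hij']
          exact hnn i
    -- objective strictly decreases: contradiction
    have hobj : ∑ i, lam i * u i = ∑ i, lam i * wstar i + ε * (lam j' - lam j) := by
      simp only [hu, mul_add]
      rw [Finset.sum_add_distrib, Finset.sum_add_distrib]
      have e1 : ∑ i, lam i * (if i = j then -ε else 0) = lam j * (-ε) := by
        rw [Finset.sum_congr rfl (fun i _ => mul_ite (i = j) (lam i) (-ε) 0)]
        simp [Finset.sum_ite_eq' Finset.univ j (fun i => lam i * (-ε))]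
      have e2 : ∑ i, lam i * (if i = j' then ε else 0) = lam j' * ε := by
        rw [Finset.sum_congr rfl (fun i _ => mul_ite (i = j') (lam i) ε 0)]
        simp [Finset.sum_ite_eq' Finset.univ j' (fun i => lam i * ε)]
      rw [e1, e2]
      ring
    have hlt : lam j' < lam j := hlam hjj'
    have hneg : ε * (lam j' - lam j) < 0 := mul_neg_of_pos_of_neg hεpos (by linarith)
    have := hopt u ⟨hcu, hmu, hnnu⟩
    rw [hobj] at this
    linarith
  · -- boundary case: j is the last index; decrease w j
    have hmax : ∀ b : Fin p, b ≤ j := by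
      intro b
      have : b.val < p := b.isLt
      have hp : p = j.val + 1 := by omega
      exact Fin.le_def.mpr (by omega)
    have hez : extz wstar (j.val + 1) = 0 := by
      simp [extz, h1]
    have hwpos : 0 < wstar j := lt_of_le_of_ne (hnn j) (fun h => hne2 (by rw [hez, ← h]))
    set ε : ℝ := min S (wstar j) with hε
    have hεpos : 0 < ε := lt_min hSpos hwpos
    have hεS : ε ≤ S := min_le_left _ _
    have hεw : ε ≤ wstar j := min_le_right _ _
    set u : Fin p → ℝ := fun i => wstar i + (if i = j then -ε else 0) with hu
    have hsum : ∀ s : Finset (Fin p),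
        ∑ i ∈ s, u i = ∑ i ∈ s, wstar i + (if j ∈ s then -ε else 0) := by
      intro s
      simp [hu, Finset.sum_add_distrib, Finset.sum_ite_eq' s]
    have huj : u j = wstar j - ε := by simp [hu, sub_eq_add_neg]
    have huo : ∀ i : Fin p, i ≠ j → u i = wstar i := by
      intro i hi
      simp [hu, hi]
    have hcu : ∀ k : Fin p, ∑ i ∈ Finset.Iic k, (y i - lam i) ≤ ∑ i ∈ Finset.Iic k, u i := by
      intro k
      rw [hsum]
      by_cases h3 : j ≤ k
      · have hkj : k = j := le_antisymm (hmax k) h3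
        subst hkj
        simp only [Finset.mem_Iic, h3, if_true]
        linarith
      · simp only [Finset.mem_Iic, h3, if_false]
        have := hc k
        linarith
    have hmu : Antitone u := by
      intro a b hab
      by_cases hbj : b = j
      · by_cases haj : a = j
        · rw [haj, hbj]
        · rw [hbj, huj, huo a haj]
          have := hmono hab
          rw [hbj] at this
          linarith
      · have haj : a ≠ j := fun h => hbj (le_antisymm (hmax b) (by rw [← h]; exact hab))
        rw [huo a haj, huo b hbj]
        exact hmono hab
    have hnnu : ∀ i, 0 ≤ u i := by
      intro i
      by_cases hij : i = j
      · subst hij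
        rw [huj]
        linarith
      · rw [huo i hij]
        exact hnn i
    have hobj : ∑ i, lam i * u i = ∑ i, lam i * wstar i + lam j * (-ε) := by
      simp only [hu, mul_add]
      rw [Finset.sum_add_distrib]
      have e1 : ∑ i, lam i * (if i = j then -ε else 0) = lam j * (-ε) := by
        rw [Finset.sum_congr rfl (fun i _ => mul_ite (i = j) (lam i) (-ε) 0)]
        simp [Finset.sum_ite_eq' Finset.univ j (fun i => lam i * (-ε))]
      rw [e1]
    have hneg : lam j * (-ε) < 0 := mul_neg_of_pos_of_neg (hpos j) (by linarith)
    have := hopt u ⟨hcu, hmu, hnnu⟩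
    rw [hobj] at this
    linarith

/-- If the constraint at `j` is tight, then `wstar j ≤ y j - lam j`. -/
lemma tight_imp_le {p : ℕ} {lam y wstar : Fin p → ℝ}
    (hc : ∀ k : Fin p, ∑ i ∈ Finset.Iic k, (y i - lam i) ≤ ∑ i ∈ Finset.Iic k, wstar i)
    {j : Fin p}
    (ht : (∑ i ∈ Finset.Iic j, (y i - lam i)) = ∑ i ∈ Finset.Iic j, wstar i) :
    wstar j ≤ y j - lam j := by
  have h1 := feas_Iio hc j
  rw [sum_Iic_split (fun i => y i - lam i) j, sum_Iic_split wstar j] at ht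
  linarith

/-- structural properties of solutions of the ODS linear program. -/
theorem lp_sol_structure {p : ℕ} (lam : Fin p → ℝ)
    (hlam : StrictAnti lam) (hpos : ∀ i, 0 < lam i)
    (y : Fin p → ℝ) (hy : Antitone y) (hynn : ∀ i, 0 ≤ y i)
    (wstar : Fin p → ℝ)
    (hfeas : LPFeas y lam wstar)
    (hopt : ∀ u : Fin p → ℝ, LPFeas y lam u → ∑ i, lam i * wstar i ≤ ∑ i, lam i * u i) :
    ∀ j : Fin p,
      ((∑ i ∈ Finset.Iic j, (y i - lam i)) = ∑ i ∈ Finset.Iic j, wstar i ∨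
        wstar j = extz wstar (j.val + 1)) ∧
      extz y (j.val + 1) - extz wstar (j.val + 1) ≤ y j - wstar j := by
  intro j
  have hif := tight_or_flat hlam hpos hfeas hopt j
  obtain ⟨hc, hmono, hnn⟩ := hfeas
  refine ⟨hif, ?_⟩
  by_contra hcon
  push_neg at hcon
  by_cases h1 : j.val + 1 < p
  · set j' : Fin p := ⟨j.val + 1, h1⟩ with hj'
    have hjj' : j < j' := by simp [Fin.lt_def, hj']
    rw [show extz y (j.val + 1) = y j' by simp [extz, h1, hj'],
        show extz wstar (j.val + 1) = wstar j' by simp [extz, h1, hj']] at hcon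
    have hyj : y j' ≤ y j := hy hjj'.le
    have hwgt : wstar j' < wstar j := by linarith
    have ht : (∑ i ∈ Finset.Iic j, (y i - lam i)) = ∑ i ∈ Finset.Iic j, wstar i := by
      rcases hif with h | h
      · exact h
      · exfalso
        rw [show extz wstar (j.val + 1) = wstar j' by simp [extz, h1, hj']] at h
        linarith
    have hle : wstar j ≤ y j - lam j := tight_imp_le hc ht
    -- feasibility at j' together with tightness at j
    have hfj' := hc j'
    have hIio : Finset.Iio j' = Finset.Iic j := by
      ext i
      simp only [Finset.mem_Iio, Finset.mem_Iic, Fin.lt_def, Fin.le_def, hj']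
      omega
    rw [sum_Iic_split (fun i => y i - lam i) j', sum_Iic_split wstar j', hIio, ht] at hfj'
    have hle' : y j' - lam j' ≤ wstar j' := by
      simpa using (by linarith : y j' - lam j' ≤ wstar j')
    have hll : lam j' < lam j := hlam hjj'
    linarith
  · rw [show extz y (j.val + 1) = 0 by simp [extz, h1],
        show extz wstar (j.val + 1) = 0 by simp [extz, h1]] at hcon
    have ht : (∑ i ∈ Finset.Iic j, (y i - lam i)) = ∑ i ∈ Finset.Iic j, wstar i := by
      rcases hif with h | h
      · exact h
      · exfalso
        rw [show extz wstar (j.val + 1) = 0 by simp [extz, h1]] at h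
        have := hynn j
        linarith
    have hle : wstar j ≤ y j - lam j := tight_imp_le hc ht
    have := hpos j
    linarith
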